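/- Let s ≥ 1 be an integer and λ, μ real numbers such that for every positive integer r, (1/r^{s+1})·C(r−1, s) ≤ λ·(r−1)/(2r) + μ. Then for every m ≥ 1 and every (α_1, ..., α_m) in the standard simplex (α_i ≥ 0, ∑α_i = 1), we have ∑_{i=1}^m ∑_{W} α_i² ∏_{j∈W} α_j ≤ λ·∑_{i<j} α_i α_j + μ, where the inner sum runs over all s-element subsets W of [m]\{i}. -/

import Mathlib

open Finset

namespace Stmt5Aux

variable {m : ℕ}

noncomputable def es (s : ℕ) (T : Finset (Fin m)) (β : Fin m → ℝ) : ℝ :=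
  ∑ W ∈ T.powersetCard s, ∏ j ∈ W, β j

theorem es_congr {s : ℕ} {T : Finset (Fin m)} {β γ : Fin m → ℝ}
    (h : ∀ k ∈ T, β k = γ k) : es s T β = es s T γ := by
  unfold es
  refine Finset.sum_congr rfl fun W hW => Finset.prod_congr rfl fun j hj => ?_
  exact h j ((Finset.mem_powersetCard.1 hW).1 hj)

@[simp] theorem es_zero {T : Finset (Fin m)} {β : Fin m → ℝ} : es 0 T β = 1 := by
  simp [es]

theorem es_erase {s : ℕ} {T : Finset (Fin m)} {β : Fin m → ℝ} {j : Fin m} (hj : j ∈ T) :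
    es (s + 1) T β = es (s + 1) (T.erase j) β + β j * es s (T.erase j) β := by
  unfold es
  have h1 : T = insert j (T.erase j) := (Finset.insert_erase hj).symm
  conv_lhs => rw [h1]
  rw [Finset.powersetCard_succ_insert (Finset.notMem_erase _ _),
    Finset.sum_union, Finset.sum_image, Finset.mul_sum]
  · congr 1
    refine Finset.sum_congr rfl fun W hW => ?_
    have hjW : j ∉ W := fun hc =>
      (Finset.notMem_erase j T) ((Finset.mem_powersetCard.1 hW).1 hc)
    rw [Finset.prod_insert hjW]
  · intro W hW W' hW' hWW'
    have hjW : j ∉ W := fun hc =>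
      (Finset.notMem_erase j T) ((Finset.mem_powersetCard.1 hW).1 hc)
    have hjW' : j ∉ W' := fun hc =>
      (Finset.notMem_erase j T) ((Finset.mem_powersetCard.1 hW').1 hc)
    have := congrArg (Finset.erase · j) hWW'
    simpa [Finset.erase_insert, hjW, hjW'] using this
  · rw [Finset.disjoint_left]
    intro W hW hW2
    obtain ⟨W', hW', rfl⟩ := Finset.mem_image.1 hW2
    exact (Finset.notMem_erase j T) ((Finset.mem_powersetCard.1 hW).1 (Finset.mem_insert_self _ _))

/-- Uniform version, valid for all `s` (for `s = 0` the correction term is `0`). -/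
theorem es_erase' {s : ℕ} {T : Finset (Fin m)} {β : Fin m → ℝ} {j : Fin m} (hj : j ∈ T) :
    es s T β = es s (T.erase j) β +
      β j * (if s = 0 then 0 else es (s - 1) (T.erase j) β) := by
  cases s with
  | zero => simp
  | succ t => simpa using es_erase (s := t) hj

theorem es_filter_ne {s : ℕ} {T : Finset (Fin m)} {β : Fin m → ℝ} :
    es s T β = es s (T.filter fun k => β k ≠ 0) β := by
  unfold es
  rw [eq_comm]
  refine Finset.sum_subset ?_ ?_
  · intro W hW
    rw [Finset.mem_powersetCard] at hW ⊢
    exact ⟨hW.1.trans (Finset.filter_subset _ _), hW.2⟩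
  · intro W hW hW2
    rw [Finset.mem_powersetCard] at hW hW2
    have : ∃ j ∈ W, β j = 0 := by
      by_contra hc
      push_neg at hc
      exact hW2 ⟨fun x hx => Finset.mem_filter.2 ⟨hW.1 hx, hc x hx⟩, hW.2⟩
    obtain ⟨j, hjW, hj0⟩ := this
    exact Finset.prod_eq_zero hjW hj0

theorem es_const {s : ℕ} {T : Finset (Fin m)} {β : Fin m → ℝ} {v : ℝ}
    (h : ∀ k ∈ T, β k = v) : es s T β = (T.card.choose s) * v ^ s := by
  unfold es
  have : ∀ W ∈ T.powersetCard s, ∏ j ∈ W, β j = v ^ s := by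
    intro W hW
    rw [Finset.mem_powersetCard] at hW
    rw [Finset.prod_congr rfl fun j hj => h j (hW.1 hj), Finset.prod_const, hW.2]
  rw [Finset.sum_congr rfl this, Finset.sum_const, Finset.card_powersetCard, nsmul_eq_mul]



theorem e2_eq (β : Fin m → ℝ) :
    ∑ p ∈ univ.filter (fun p : Fin m × Fin m => p.1 < p.2), β p.1 * β p.2
      = ((∑ k, β k) ^ 2 - ∑ k, (β k) ^ 2) / 2 := by
  have h1 : (∑ k, β k) ^ 2 = ∑ p ∈ (univ : Finset (Fin m × Fin m)), β p.1 * β p.2 := by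
    rw [sq, Finset.sum_mul_sum, ← Finset.univ_product_univ, Finset.sum_product]
  have h2 := Finset.sum_filter_add_sum_filter_not (univ : Finset (Fin m × Fin m))
    (fun p => p.1 < p.2) (fun p => β p.1 * β p.2)
  have h3 := Finset.sum_filter_add_sum_filter_not
    ((univ : Finset (Fin m × Fin m)).filter (fun p => ¬ p.1 < p.2))
    (fun p => p.1 = p.2) (fun p => β p.1 * β p.2)
  have hd : ((univ : Finset (Fin m × Fin m)).filter (fun p => ¬ p.1 < p.2)).filter
      (fun p => p.1 = p.2) = (univ.image fun k => (k, k)) := by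
    ext ⟨a, b⟩
    simp only [Finset.mem_filter, Finset.mem_univ, true_and, Finset.mem_image]
    simp only [Prod.mk.injEq]
    constructor
    · rintro ⟨-, h⟩; exact ⟨a, rfl, h⟩
    · rintro ⟨k, rfl, rfl⟩
      exact ⟨lt_irrefl _, rfl⟩
  have hdiag : ∑ p ∈ ((univ : Finset (Fin m × Fin m)).filter (fun p => ¬ p.1 < p.2)).filter
      (fun p => p.1 = p.2), β p.1 * β p.2 = ∑ k, (β k) ^ 2 := by
    rw [hd, Finset.sum_image (by intro a _ b _ h; simpa using congrArg Prod.fst h)]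
    exact Finset.sum_congr rfl fun k _ => (sq (β k)).symm
  have hgt : ((univ : Finset (Fin m × Fin m)).filter (fun p => ¬ p.1 < p.2)).filter
      (fun p => ¬ p.1 = p.2) = (univ.filter fun p : Fin m × Fin m => p.1 < p.2).image
        (fun p => (p.2, p.1)) := by
    ext ⟨a, b⟩
    simp only [Finset.mem_filter, Finset.mem_univ, true_and, Finset.mem_image, Prod.mk.injEq]
    constructor
    · rintro ⟨h1, h2⟩
      exact ⟨(b, a), lt_of_le_of_ne (not_lt.1 h1) (Ne.symm h2), rfl, rfl⟩
    · rintro ⟨⟨c, d⟩, hcd, h1, h2⟩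
      subst h1; subst h2
      exact ⟨not_lt.2 hcd.le, ne_of_gt hcd⟩
  have hgtsum : ∑ p ∈ ((univ : Finset (Fin m × Fin m)).filter (fun p => ¬ p.1 < p.2)).filter
      (fun p => ¬ p.1 = p.2), β p.1 * β p.2
      = ∑ p ∈ univ.filter (fun p : Fin m × Fin m => p.1 < p.2), β p.1 * β p.2 := by
    have hinj : ∀ x ∈ univ.filter (fun p : Fin m × Fin m => p.1 < p.2),
        ∀ y ∈ univ.filter (fun p : Fin m × Fin m => p.1 < p.2),
        (fun p : Fin m × Fin m => (p.2, p.1)) x = (fun p : Fin m × Fin m => (p.2, p.1)) y →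
        x = y := by
      rintro ⟨a, b⟩ - ⟨c, d⟩ - h
      simp only [Prod.mk.injEq] at h
      simp [h.1, h.2]
    rw [hgt, Finset.sum_image hinj]
    exact Finset.sum_congr rfl fun p _ => mul_comm _ _
  rw [hdiag, hgtsum] at h3
  rw [← h3] at h2
  rw [h1, ← h2]
  ring

noncomputable def gF (s : ℕ) (β : Fin m → ℝ) : ℝ :=
  ∑ i, β i ^ 2 * es s (univ.erase i) β

noncomputable def FF (s : ℕ) (lam : ℝ) (β : Fin m → ℝ) : ℝ :=
  gF s β - lam * (((∑ k, β k) ^ 2 - ∑ k, (β k) ^ 2) / 2)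

theorem sum_apply_update2' {β : Fin m → ℝ} {i j : Fin m} (hij : i ≠ j) (x y : ℝ)
    (φ : Fin m → ℝ → ℝ) :
    ∑ k, φ k (Function.update (Function.update β i x) j y k)
      = φ i x + φ j y + ∑ k ∈ (univ.erase i).erase j, φ k (β k) := by
  have hi : i ∈ (univ : Finset (Fin m)) := Finset.mem_univ i
  have hj : j ∈ univ.erase i := Finset.mem_erase.2 ⟨hij.symm, Finset.mem_univ j⟩
  rw [← Finset.add_sum_erase _ _ hi, ← Finset.add_sum_erase _ _ hj]
  have v1 : Function.update (Function.update β i x) j y i = x := by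
    rw [Function.update_of_ne hij, Function.update_self]
  have v2 : Function.update (Function.update β i x) j y j = y := Function.update_self _ _ _
  rw [v1, v2, add_assoc]
  congr 1
  congr 1
  refine Finset.sum_congr rfl fun k hk => ?_
  have hkj : k ≠ j := (Finset.mem_erase.1 hk).1
  have hki : k ≠ i := (Finset.mem_erase.1 (Finset.mem_erase.1 hk).2).1
  rw [Function.update_of_ne hkj, Function.update_of_ne hki]

theorem key {s : ℕ} (hs : 1 ≤ s) (lam : ℝ) {β : Fin m → ℝ} {i j : Fin m} (hij : i ≠ j) :
    ∃ K σ : ℝ, ∀ x y : ℝ, x + y = β i + β j →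
      FF s lam (Function.update (Function.update β i x) j y) = K + σ * (x * y) := by
  obtain ⟨t, rfl⟩ : ∃ t, s = t + 1 := ⟨s - 1, (Nat.succ_pred_eq_of_pos hs).symm⟩
  classical
  set c : ℝ := β i + β j with hc
  set R : Finset (Fin m) := (univ.erase i).erase j with hR
  set A : ℝ := es (t + 1) R β with hA
  set B : ℝ := es t R β with hB
  set T : Fin m → Finset (Fin m) := fun k => ((univ.erase k).erase i).erase j with hT
  set C : Fin m → ℝ := fun k => es (t + 1) (T k) β with hCdef
  set D : Fin m → ℝ := fun k => es t (T k) β with hDdef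
  set E : Fin m → ℝ := fun k => if t = 0 then 0 else es (t - 1) (T k) β with hEdef
  set SR : ℝ := ∑ k ∈ R, β k with hSR
  set QR : ℝ := ∑ k ∈ R, (β k) ^ 2 with hQR
  refine ⟨A * c ^ 2 + (∑ k ∈ R, β k ^ 2 * C k) + c * (∑ k ∈ R, β k ^ 2 * D k)
      - lam * (((SR + c) ^ 2 - (QR + c ^ 2)) / 2),
    -2 * A + B * c + (∑ k ∈ R, β k ^ 2 * E k) - lam, ?_⟩
  intro x y hxy
  set γ : Fin m → ℝ := Function.update (Function.update β i x) j y with hγ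
  have hmemR : ∀ k ∈ R, k ≠ i ∧ k ≠ j := fun k hk =>
    ⟨(Finset.mem_erase.1 (Finset.mem_erase.1 hk).2).1, (Finset.mem_erase.1 hk).1⟩
  have hγR : ∀ k ∈ R, γ k = β k := by
    intro k hk
    obtain ⟨hki, hkj⟩ := hmemR k hk
    rw [hγ, Function.update_of_ne hkj, Function.update_of_ne hki]
  have hγi : γ i = x := by rw [hγ, Function.update_of_ne hij, Function.update_self]
  have hγj : γ j = y := Function.update_self _ _ _
  -- value of `es` over sets avoiding i and j
  have hesT : ∀ n (S : Finset (Fin m)), i ∉ S → j ∉ S → es n S γ = es n S β := by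
    intro n S hiS hjS
    refine es_congr fun k hk => ?_
    have hkj : k ≠ j := fun hE => hjS (hE ▸ hk)
    have hki : k ≠ i := fun hE => hiS (hE ▸ hk)
    rw [hγ, Function.update_of_ne hkj, Function.update_of_ne hki]
  -- es over erase i
  have hei : es (t + 1) (univ.erase i) γ = A + y * B := by
    have hjmem : j ∈ univ.erase i := Finset.mem_erase.2 ⟨hij.symm, Finset.mem_univ j⟩
    rw [es_erase hjmem, ← hR, hγj,
      hesT _ R (fun hx => ((Finset.mem_erase.1 (Finset.mem_erase.1 hx).2).1) rfl)
        (fun hx => ((Finset.mem_erase.1 hx).1) rfl),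
      hesT _ R (fun hx => ((Finset.mem_erase.1 (Finset.mem_erase.1 hx).2).1) rfl)
        (fun hx => ((Finset.mem_erase.1 hx).1) rfl)]
  have hej : es (t + 1) (univ.erase j) γ = A + x * B := by
    have himem : i ∈ univ.erase j := Finset.mem_erase.2 ⟨hij, Finset.mem_univ i⟩
    have hcomm : (univ.erase j).erase i = R := by rw [hR, Finset.erase_right_comm]
    rw [es_erase himem, hcomm, hγi,
      hesT _ R (fun hx => ((Finset.mem_erase.1 (Finset.mem_erase.1 hx).2).1) rfl)
        (fun hx => ((Finset.mem_erase.1 hx).1) rfl),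
      hesT _ R (fun hx => ((Finset.mem_erase.1 (Finset.mem_erase.1 hx).2).1) rfl)
        (fun hx => ((Finset.mem_erase.1 hx).1) rfl)]
  -- es over erase k, k ∈ R
  have hiT : ∀ k, i ∉ T k := fun k hx => (Finset.mem_erase.1 (Finset.mem_erase.1 hx).2).1 rfl
  have hjT : ∀ k, j ∉ T k := fun k hx => (Finset.mem_erase.1 hx).1 rfl
  have hek : ∀ k ∈ R, es (t + 1) (univ.erase k) γ
      = C k + (x + y) * D k + x * y * E k := by
    intro k hk
    obtain ⟨hki, hkj⟩ := hmemR k hk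
    have himem : i ∈ univ.erase k := Finset.mem_erase.2 ⟨hki.symm ∘ Eq.symm ∘ Eq.symm, Finset.mem_univ i⟩
    have himem' : i ∈ univ.erase k := Finset.mem_erase.2 ⟨fun hE => hki hE.symm, Finset.mem_univ i⟩
    have hjmem : j ∈ (univ.erase k).erase i :=
      Finset.mem_erase.2 ⟨hij.symm, Finset.mem_erase.2 ⟨fun hE => hkj hE.symm, Finset.mem_univ j⟩⟩
    rw [es_erase himem', hγi, es_erase hjmem, hγj, es_erase' (s := t) hjmem, hγj]
    have hTk : ((univ.erase k).erase i).erase j = T k := rfl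
    rw [hTk, hesT _ (T k) (hiT k) (hjT k), hesT _ (T k) (hiT k) (hjT k)]
    have hE' : (if t = 0 then (0:ℝ) else es (t - 1) (T k) γ) = E k := by
      rw [hEdef]
      rcases Nat.eq_zero_or_pos t with ht | ht
      · simp [ht]
      · simp only [Nat.pos_iff_ne_zero.1 ht, if_false]
        exact hesT _ (T k) (hiT k) (hjT k)
    rw [hE']
    simp only [hCdef, hDdef]
    ring
  -- the g-part
  have hg : gF (t + 1) γ = x ^ 2 * (A + y * B) + y ^ 2 * (A + x * B)
      + ((∑ k ∈ R, β k ^ 2 * C k) + (x + y) * (∑ k ∈ R, β k ^ 2 * D k)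
        + (x * y) * (∑ k ∈ R, β k ^ 2 * E k)) := by
    have hunf : gF (t + 1) γ = ∑ k, γ k ^ 2 * es (t + 1) (univ.erase k) γ := rfl
    have step : ∑ k, γ k ^ 2 * es (t + 1) (univ.erase k) γ
        = x ^ 2 * es (t + 1) (univ.erase i) γ + y ^ 2 * es (t + 1) (univ.erase j) γ
          + ∑ k ∈ R, β k ^ 2 * es (t + 1) (univ.erase k) γ :=
      sum_apply_update2' hij x y (fun k v => v ^ 2 * es (t + 1) (univ.erase k) γ)
    rw [hunf, step, hei, hej]
    congr 1
    rw [Finset.sum_congr rfl fun k hk => by rw [hek k hk]]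
    rw [Finset.mul_sum, Finset.mul_sum, ← Finset.sum_add_distrib, ← Finset.sum_add_distrib]
    exact Finset.sum_congr rfl fun k _ => by ring
  -- the linear sums
  have hsum : ∑ k, γ k = x + y + SR :=
    sum_apply_update2' hij x y (fun _ v => v)
  have hsq : ∑ k, (γ k) ^ 2 = x ^ 2 + y ^ 2 + QR :=
    sum_apply_update2' hij x y (fun _ v => v ^ 2)
  have hFunf : FF (t + 1) lam γ
      = gF (t + 1) γ - lam * (((∑ k, γ k) ^ 2 - ∑ k, (γ k) ^ 2) / 2) := rfl
  rw [hFunf, hg, hsum, hsq]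
  have hy : y = c - x := by rw [← hxy]; ring
  subst hy
  ring


theorem continuous_FF (s : ℕ) (lam : ℝ) : Continuous (FF (m := m) s lam) := by
  have h1 : Continuous (gF (m := m) s) := by
    unfold gF es
    refine continuous_finset_sum _ fun i _ => Continuous.mul ?_ ?_
    · exact (continuous_apply i).pow 2
    · exact continuous_finset_sum _ fun W _ =>
        continuous_finset_prod _ fun j _ => continuous_apply j
  unfold FF
  refine h1.sub (continuous_const.mul (Continuous.div_const (Continuous.sub ?_ ?_) 2))
  · exact (continuous_finset_sum _ fun k _ => continuous_apply k).pow 2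
  · exact continuous_finset_sum _ fun k _ => (continuous_apply k).pow 2

theorem main (s : ℕ) (hs : 1 ≤ s) (lam mu : ℝ)
    (h : ∀ r : ℕ, 0 < r →
      (1 / (r : ℝ) ^ (s + 1)) * ((r - 1).choose s : ℝ) ≤ lam * ((r : ℝ) - 1) / (2 * r) + mu)
    (m : ℕ) (α : Fin m → ℝ) (hα0 : ∀ i, 0 ≤ α i) (hα1 : ∑ i, α i = 1) :
    FF s lam α ≤ mu := by
  classical
  set Δ : Set (Fin m → ℝ) := stdSimplex ℝ (Fin m) with hΔ
  have hαΔ : α ∈ Δ := ⟨hα0, hα1⟩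
  obtain ⟨β₀, hβ₀Δ, hβ₀max⟩ := (isCompact_stdSimplex ℝ (Fin m)).exists_isMaxOn ⟨α, hαΔ⟩
    ((continuous_FF s lam).continuousOn)
  set P : ℕ → Prop := fun n => ∃ β, β ∈ Δ ∧ (∀ γ ∈ Δ, FF s lam γ ≤ FF s lam β) ∧
    (univ.filter fun k => β k ≠ 0).card = n with hPdef
  have hP : ∃ n, P n := ⟨_, β₀, hβ₀Δ, fun γ hγ => hβ₀max hγ, rfl⟩
  obtain ⟨β, hβΔ, hβmax, hcard⟩ := Nat.find_spec hP
  set r : ℕ := Nat.find hP with hrdef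
  set supp : Finset (Fin m) := univ.filter fun k => β k ≠ 0 with hsupp
  have hpos : ∀ i, β i ≠ 0 → 0 < β i := fun i hi => lt_of_le_of_ne (hβΔ.1 i) (Ne.symm hi)
  -- all nonzero coordinates are equal
  have hequal : ∀ i j, β i ≠ 0 → β j ≠ 0 → β i = β j := by
    intro i j hi hj
    rcases eq_or_ne i j with rfl | hij
    · rfl
    obtain ⟨K, σ, hKσ⟩ := key (m := m) hs lam (β := β) hij
    have hupdeq : Function.update (Function.update β i (β i)) j (β j) = β := by
      rw [Function.update_eq_self, Function.update_eq_self]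
    have hself : FF s lam β = K + σ * (β i * β j) := by
      have h0 := hKσ (β i) (β j) rfl
      rwa [hupdeq] at h0
    have hsumβ : β i + β j + (∑ k ∈ (univ.erase i).erase j, β k) = 1 := by
      have h1 := sum_apply_update2' (β := β) hij (β i) (β j) (fun _ v => v)
      rw [hupdeq] at h1
      rw [← h1]
      exact hβΔ.2
    have hupdmem : ∀ x y : ℝ, 0 ≤ x → 0 ≤ y → x + y = β i + β j →
        Function.update (Function.update β i x) j y ∈ Δ := by
      intro x y hx hy hxy
      refine ⟨fun k => ?_, ?_⟩
      · rcases eq_or_ne k j with rfl | hkj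
        · rw [Function.update_self]; exact hy
        rcases eq_or_ne k i with rfl | hki
        · rw [Function.update_of_ne hkj, Function.update_self]; exact hx
        · rw [Function.update_of_ne hkj, Function.update_of_ne hki]; exact hβΔ.1 k
      · have h2 := sum_apply_update2' (β := β) hij x y (fun _ v => v)
        rw [h2]
        rw [hxy]
        exact hsumβ
    have hisupp : i ∈ supp := Finset.mem_filter.2 ⟨Finset.mem_univ i, hi⟩
    have hr1 : 1 ≤ r := by
      rw [← hcard]
      exact Finset.card_pos.2 ⟨i, hisupp⟩
    have hσpos : 0 < σ := by
      by_contra hσ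
      push_neg at hσ
      set β' : Fin m → ℝ := Function.update (Function.update β i 0) j (β i + β j) with hβ'
      have hβ'Δ : β' ∈ Δ := hupdmem 0 (β i + β j) le_rfl
        (by have := hpos i hi; have := hpos j hj; linarith) (by ring)
      have hβ'F : FF s lam β' = K := by rw [hKσ 0 _ (by ring)]; ring
      have hble : FF s lam β ≤ FF s lam β' := by
        rw [hβ'F, hself]
        nlinarith [mul_pos (hpos i hi) (hpos j hj)]
      have hβ'max : ∀ γ ∈ Δ, FF s lam γ ≤ FF s lam β' :=
        fun γ hγ => le_trans (hβmax γ hγ) hble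
      have hsupp' : (univ.filter fun k => β' k ≠ 0) = supp.erase i := by
        ext k
        rcases eq_or_ne k j with hkj | hkj
        · subst hkj
          have hv : β' k = β i + β k := Function.update_self _ _ _
          simp only [Finset.mem_filter, Finset.mem_univ, true_and, Finset.mem_erase, hv, hsupp]
          have hne : β i + β k ≠ 0 := by have := hpos i hi; have := hpos _ hj; linarith
          simp [hne, hij.symm, hj]
        rcases eq_or_ne k i with hki | hki
        · subst hki
          have hv : β' k = 0 := by
            rw [hβ', Function.update_of_ne hij, Function.update_self]
          simp [Finset.mem_filter, hv, Finset.mem_erase]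
        · have : β' k = β k := by
            rw [hβ', Function.update_of_ne hkj, Function.update_of_ne hki]
          simp only [Finset.mem_filter, Finset.mem_univ, true_and, Finset.mem_erase, this, hsupp]
          simp [hki]
      have hPr : P (r - 1) := by
        refine ⟨β', hβ'Δ, hβ'max, ?_⟩
        rw [hsupp', Finset.card_erase_of_mem hisupp, hcard]
      exact Nat.find_min hP (by omega) hPr
    -- midpoint comparison
    set c : ℝ := β i + β j with hcdef
    have hc2 : (0:ℝ) ≤ c / 2 := by have := hpos i hi; have := hpos j hj; simp [hcdef]; linarith
    have hmidmem := hupdmem (c / 2) (c / 2) hc2 hc2 (by rw [hcdef]; ring)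
    have hmid := hβmax _ hmidmem
    rw [hKσ (c / 2) (c / 2) (by rw [hcdef]; ring), hself] at hmid
    have hsq : (β i - β j) ^ 2 ≤ 0 := by nlinarith
    have := le_antisymm hsq (sq_nonneg _)
    have h0 : β i - β j = 0 := by
      have := sq_eq_zero_iff.1 this
      exact this
    linarith
  -- β is uniform on its support
  have hrpos : 0 < r := by
    rcases Nat.eq_zero_or_pos r with h0 | h0
    · exfalso
      have hempty : supp = ∅ := Finset.card_eq_zero.1 (by rw [hcard, h0])
      have hzero : ∀ k, β k = 0 := by
        intro k
        by_contra hk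
        have : k ∈ supp := Finset.mem_filter.2 ⟨Finset.mem_univ k, hk⟩
        simp [hempty] at this
      have : (1:ℝ) = 0 := by
        rw [← hβΔ.2]
        simp [hzero]
      norm_num at this
    · exact h0
  have hsum_supp : ∑ k ∈ supp, β k = 1 := by
    rw [hsupp, Finset.sum_filter_ne_zero]
    exact hβΔ.2
  have hval : ∀ k ∈ supp, β k = 1 / r := by
    intro k hk
    have hkne : β k ≠ 0 := (Finset.mem_filter.1 hk).2
    have hconst : ∀ l ∈ supp, β l = β k := fun l hl =>
      hequal l k (Finset.mem_filter.1 hl).2 hkne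
    have : ∑ l ∈ supp, β l = r * β k := by
      rw [Finset.sum_congr rfl hconst, Finset.sum_const, hcard, nsmul_eq_mul]
    rw [hsum_supp] at this
    field_simp
    linarith [this]
  -- compute FF at β
  have hrR : (0:ℝ) < (r:ℝ) := by exact_mod_cast hrpos
  have hQ : ∑ k, (β k) ^ 2 = 1 / r := by
    have h1 : ∑ k, (β k) ^ 2 = ∑ k ∈ supp, (β k) ^ 2 := by
      rw [eq_comm]
      refine Finset.sum_subset (Finset.subset_univ _) fun k _ hk => ?_
      have : β k = 0 := by
        by_contra hc
        exact hk (Finset.mem_filter.2 ⟨Finset.mem_univ k, hc⟩)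
      rw [this]; ring
    rw [h1, Finset.sum_congr rfl fun k hk => by rw [hval k hk], Finset.sum_const, hcard,
      nsmul_eq_mul]
    field_simp
  have hgβ : gF s β = 1 / (r:ℝ) ^ (s + 1) * ((r - 1).choose s : ℝ) := by
    have h1 : gF s β = ∑ k ∈ supp, β k ^ 2 * es s (univ.erase k) β := by
      rw [gF, eq_comm]
      refine Finset.sum_subset (Finset.subset_univ _) fun k _ hk => ?_
      have : β k = 0 := by
        by_contra hc
        exact hk (Finset.mem_filter.2 ⟨Finset.mem_univ k, hc⟩)
      rw [this]; ring
    have h2 : ∀ k ∈ supp, β k ^ 2 * es s (univ.erase k) β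
        = (1 / r) ^ 2 * (((r - 1).choose s : ℝ) * (1 / r) ^ s) := by
      intro k hk
      have hfil : (univ.erase k).filter (fun l => β l ≠ 0) = supp.erase k := by
        ext l
        simp only [Finset.mem_filter, Finset.mem_erase, Finset.mem_univ, true_and, hsupp]
        tauto
      have hes : es s (univ.erase k) β = ((r - 1).choose s : ℝ) * (1 / r) ^ s := by
        rw [es_filter_ne, hfil, es_const (v := 1 / r)
          (fun l hl => hval l (Finset.mem_erase.1 hl).2),
          Finset.card_erase_of_mem hk, hcard]
      rw [hes, hval k hk]
    rw [h1, Finset.sum_congr rfl h2, Finset.sum_const, hcard, nsmul_eq_mul]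
    field_simp
    have hrs : (1 / (r:ℝ)) ^ s * (r:ℝ) ^ s = 1 := by
      rw [← mul_pow, one_div, inv_mul_cancel₀ hrR.ne', one_pow]
    rw [pow_succ]
    linear_combination (((r - 1).choose s : ℝ) * r) * hrs
  have hFβ : FF s lam β = 1 / (r:ℝ) ^ (s + 1) * ((r - 1).choose s : ℝ)
      - lam * ((r:ℝ) - 1) / (2 * r) := by
    rw [FF, hgβ, hβΔ.2, hQ]
    field_simp
  have hβmu : FF s lam β ≤ mu := by
    have := h r hrpos
    rw [hFβ]
    linarith
  exact le_trans (hβmax α hαΔ) hβmu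

end Stmt5Aux


/-- If `(1/r^{s+1})·C(r−1,s) ≤ λ(r−1)/(2r) + μ` for every positive integer `r`, then for
every point `(α_1,…,α_m)` of the standard simplex,
`∑_i ∑_{W ⊆ [m]∖{i}, |W| = s} α_i² ∏_{j∈W} α_j ≤ λ ∑_{i<j} α_i α_j + μ`. -/
theorem stmt5 (s : ℕ) (hs : 1 ≤ s) (lam mu : ℝ)
    (h : ∀ r : ℕ, 0 < r →
      (1 / (r : ℝ) ^ (s + 1)) * ((r - 1).choose s : ℝ) ≤ lam * ((r : ℝ) - 1) / (2 * r) + mu)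
    (m : ℕ) (hm : 1 ≤ m) (α : Fin m → ℝ) (hα0 : ∀ i, 0 ≤ α i) (hα1 : ∑ i, α i = 1) :
    ∑ i : Fin m, (α i) ^ 2 *
        ∑ W ∈ (Finset.univ.erase i).powersetCard s, ∏ j ∈ W, α j ≤
      lam * ∑ p ∈ Finset.univ.filter (fun p : Fin m × Fin m => p.1 < p.2), α p.1 * α p.2
        + mu := by
  have hmain := Stmt5Aux.main s hs lam mu h m α hα0 hα1
  have hFF : Stmt5Aux.FF s lam α
      = Stmt5Aux.gF s α - lam * (((∑ k, α k) ^ 2 - ∑ k, (α k) ^ 2) / 2) := rfl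
  have hL : ∑ i : Fin m, (α i) ^ 2 *
      ∑ W ∈ (Finset.univ.erase i).powersetCard s, ∏ j ∈ W, α j = Stmt5Aux.gF s α := rfl
  rw [hL, Stmt5Aux.e2_eq α]
  rw [hFF] at hmain
  linarith
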